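/- Every frame for ℝ³ is piecewise scalable: for every finite family {x_i}_{i=1}^m spanning ℝ³ there exist an orthogonal projection P on ℝ³ and real constants a_1,...,a_m, b_1,...,b_m such that {a_i P x_i + b_i (I−P) x_i}_{i=1}^m is a Parseval frame for ℝ³. -/

import Mathlib

open scoped RealInnerProductSpace
open Finset

noncomputable section

/-- A finite family of vectors in `ℝⁿ` is a Parseval frame if
`∑ i, ⟪x, v i⟫² = ‖x‖²` for all `x`. -/
def IsParseval {n : ℕ} {ι : Type} [Fintype ι] (v : ι → EuclideanSpace ℝ (Fin n)) : Prop :=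
  ∀ x : EuclideanSpace ℝ (Fin n), ∑ i, ⟪x, v i⟫ ^ 2 = ‖x‖ ^ 2

/-- `P` is an orthogonal projection: idempotent and self-adjoint. -/
def IsOrthProj {n : ℕ} (P : EuclideanSpace ℝ (Fin n) →ₗ[ℝ] EuclideanSpace ℝ (Fin n)) : Prop :=
  P ∘ₗ P = P ∧ ∀ x y : EuclideanSpace ℝ (Fin n), ⟪P x, y⟫ = ⟪x, P y⟫

abbrev E3 := EuclideanSpace ℝ (Fin 3)

lemma inner_eq_dot (x y : E3) : ⟪x, y⟫ = dotProduct (x : Fin 3 → ℝ) (y : Fin 3 → ℝ) := by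
  simp [PiLp.inner_apply, dotProduct, mul_comm]
lemma det_ne_zero_of_li (v : Fin 3 → E3) (hv : LinearIndependent ℝ v) :
    Matrix.det (Matrix.of ![(v 0 : Fin 3 → ℝ), v 1, v 2]) ≠ 0 := by
  have hli : LinearIndependent ℝ (fun i => (Matrix.of ![(v 0 : Fin 3 → ℝ), v 1, v 2]) i) := by
    have hmap : LinearIndependent ℝ
        (fun i => (EuclideanSpace.equiv (Fin 3) ℝ).toLinearEquiv (v i)) :=
      hv.map' _ (EuclideanSpace.equiv (Fin 3) ℝ).toLinearEquiv.ker
    convert hmap.comp _ (fun k l h => h) using 1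
    funext i
    fin_cases i <;> rfl
  have := Matrix.linearIndependent_rows_iff_isUnit.mp hli
  rw [Matrix.isUnit_iff_isUnit_det] at this
  exact this.ne_zero
lemma exists_normal (v : Fin 3 → E3) (hv : LinearIndependent ℝ v) :
    ∃ n : E3, ⟪n, n⟫ = 1 ∧ ⟪n, v 0⟫ = 0 ∧ ⟪n, v 1⟫ = 0 ∧ ⟪n, v 2⟫ ≠ 0 := by
  classical
  set N : E3 := WithLp.toLp 2 ((crossProduct (v 0 : Fin 3 → ℝ)) (v 1 : Fin 3 → ℝ) : Fin 3 → ℝ) with hN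
  have hN2 : ⟪v 2, N⟫ ≠ 0 := by
    rw [inner_eq_dot]
    show dotProduct (v 2 : Fin 3 → ℝ) (crossProduct (v 0 : Fin 3 → ℝ) (v 1)) ≠ 0
    rw [triple_product_permutation, triple_product_eq_det]
    exact det_ne_zero_of_li v hv
  have hN0 : ⟪N, v 0⟫ = 0 := by
    rw [inner_eq_dot, dotProduct_comm]
    exact dot_self_cross _ _
  have hN1 : ⟪N, v 1⟫ = 0 := by
    rw [inner_eq_dot, dotProduct_comm]
    exact dot_cross_self _ _
  have hNne : N ≠ 0 := by
    intro h
    exact hN2 (by simp [h])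
  have hNnorm : ‖N‖ ≠ 0 := norm_ne_zero_iff.mpr hNne
  refine ⟨‖N‖⁻¹ • N, ?_, ?_, ?_, ?_⟩
  · rw [real_inner_smul_left, real_inner_smul_right, real_inner_self_eq_norm_mul_norm]
    field_simp
  · rw [real_inner_smul_left, hN0, mul_zero]
  · rw [real_inner_smul_left, hN1, mul_zero]
  · rw [real_inner_smul_left]
    exact mul_ne_zero (inv_ne_zero hNnorm) (fun h => hN2 (by rw [real_inner_comm]; exact h))
lemma ortho_triple {u0 u1 w : E3} {c : ℝ} (hc0 : 0 ≤ c) (hc1 : c < 1)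
    (h00 : ⟪u0, u0⟫ = 1) (h11 : ⟪u1, u1⟫ = 1) (h01 : ⟪u0, u1⟫ = c)
    (hww : ⟪w, w⟫ = 1) (hw0 : ⟪w, u0⟫ = Real.sqrt c) (hw1 : ⟪w, u1⟫ = Real.sqrt c) :
    Orthonormal ℝ
      ![(Real.sqrt (1 - c))⁻¹ • (u0 - Real.sqrt c • w),
        (Real.sqrt (1 - c))⁻¹ • (u1 - Real.sqrt c • w), w] := by
  have hs : Real.sqrt c * Real.sqrt c = c := Real.mul_self_sqrt hc0
  have h1c : (0:ℝ) < 1 - c := by linarith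
  have hrr : Real.sqrt (1 - c) * Real.sqrt (1 - c) = 1 - c := Real.mul_self_sqrt h1c.le
  have hrne : Real.sqrt (1 - c) ≠ 0 := by positivity
  have hr : (Real.sqrt (1 - c))⁻¹ * (Real.sqrt (1 - c))⁻¹ * (1 - c) = 1 := by
    rw [← mul_inv, hrr]; exact inv_mul_cancel₀ h1c.ne'
  have hu0w : ⟪u0, w⟫ = Real.sqrt c := by rw [real_inner_comm]; exact hw0
  have hu1w : ⟪u1, w⟫ = Real.sqrt c := by rw [real_inner_comm]; exact hw1
  have h10 : ⟪u1, u0⟫ = c := by rw [real_inner_comm]; exact h01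
  rw [orthonormal_iff_ite]
  intro i j
  fin_cases i <;> fin_cases j <;>
    simp [-inner_self_eq_norm_sq_to_K, inner_smul_left, inner_smul_right, inner_sub_left, inner_sub_right,
      h00, h11, h01, h10, hww, hw0, hw1, hu0w, hu1w] <;>
    first
    | nlinarith [hs, hr]
    | exact Or.inr (by nlinarith [hs])
lemma build_w {u0 u1 n z : E3} {c : ℝ} (hc0 : 0 ≤ c) (hc1 : c < 1)
    (h00 : ⟪u0, u0⟫ = 1) (h11 : ⟪u1, u1⟫ = 1) (h01 : ⟪u0, u1⟫ = c)
    (hnn : ⟪n, n⟫ = 1) (hnu0 : ⟪n, u0⟫ = 0) (hnu1 : ⟪n, u1⟫ = 0) (hnz : ⟪n, z⟫ ≠ 0) :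
    ∃ w : E3, ⟪w, w⟫ = 1 ∧ ⟪w, u0⟫ = Real.sqrt c ∧ ⟪w, u1⟫ = Real.sqrt c ∧ ⟪w, z⟫ ≠ 0 := by
  have h1pc : (0:ℝ) < 1 + c := by linarith
  have hs2 : Real.sqrt c * Real.sqrt c = c := Real.mul_self_sqrt hc0
  have h10 : ⟪u1, u0⟫ = c := by rw [real_inner_comm]; exact h01
  have hu0n : ⟪u0, n⟫ = 0 := by rw [real_inner_comm]; exact hnu0
  have hu1n : ⟪u1, n⟫ = 0 := by rw [real_inner_comm]; exact hnu1
  set t0 : ℝ := Real.sqrt ((1 - c) / (1 + c)) with ht0def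
  have ht0pos : 0 < t0 := Real.sqrt_pos.mpr (div_pos (by linarith) h1pc)
  have ht02 : t0 * t0 = (1 - c) / (1 + c) :=
    Real.mul_self_sqrt (le_of_lt (div_pos (by linarith) h1pc))
  have key : ∀ t : ℝ, t * t = (1 - c) / (1 + c) →
      (⟪(Real.sqrt c / (1 + c)) • (u0 + u1) + t • n,
        (Real.sqrt c / (1 + c)) • (u0 + u1) + t • n⟫ = 1 ∧
       ⟪(Real.sqrt c / (1 + c)) • (u0 + u1) + t • n, u0⟫ = Real.sqrt c ∧
       ⟪(Real.sqrt c / (1 + c)) • (u0 + u1) + t • n, u1⟫ = Real.sqrt c ∧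
       ⟪(Real.sqrt c / (1 + c)) • (u0 + u1) + t • n, z⟫
         = (Real.sqrt c / (1 + c)) * ⟪u0 + u1, z⟫ + t * ⟪n, z⟫) := by
    intro t ht
    refine ⟨?_, ?_, ?_, ?_⟩
    · simp only [inner_add_left, inner_add_right, real_inner_smul_left, real_inner_smul_right,
        h00, h11, h01, h10, hnn, hnu0, hnu1, hu0n, hu1n]
      have ht' : t * t * (1 + c) = 1 - c := by rw [ht]; field_simp
      field_simp
      nlinarith [hs2, ht', sq_nonneg (1 + c)]
    · simp only [inner_add_left, real_inner_smul_left, h00, h10, hnu0, mul_zero, add_zero]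
      exact div_mul_cancel₀ _ (by linarith)
    · simp only [inner_add_left, real_inner_smul_left, h01, h11, hnu1, mul_zero, add_zero]
      rw [show c + 1 = 1 + c from by ring]
      exact div_mul_cancel₀ _ (by linarith)
    · simp only [inner_add_left, real_inner_smul_left]
  by_cases hz : (Real.sqrt c / (1 + c)) * ⟪u0 + u1, z⟫ + t0 * ⟪n, z⟫ = 0
  · obtain ⟨hA, hB, hC, hD⟩ := key (-t0) (by rw [neg_mul_neg]; exact ht02)
    refine ⟨_, hA, hB, hC, ?_⟩
    rw [hD]
    intro hcon
    apply hnz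
    have h2 : t0 * ⟪n, z⟫ = 0 := by linarith
    rcases mul_eq_zero.mp h2 with h' | h'
    · exact absurd h' ht0pos.ne'
    · exact h'
  · obtain ⟨hA, hB, hC, hD⟩ := key t0 ht02
    exact ⟨_, hA, hB, hC, by rw [hD]; exact hz⟩
lemma core_abstract (v : Fin 3 → E3) (u0 u1 w : E3) (c k0 k1 : ℝ)
    (hk0 : k0 ≠ 0) (hk1 : k1 ≠ 0) (h0 : v 0 = k0 • u0) (h1 : v 1 = k1 • u1)
    (hc0 : 0 ≤ c) (hc1 : c < 1) (h00 : ⟪u0, u0⟫ = 1) (h11 : ⟪u1, u1⟫ = 1)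
    (h01 : ⟪u0, u1⟫ = c) (hww : ⟪w, w⟫ = 1)
    (hw0 : ⟪w, u0⟫ = Real.sqrt c) (hw1 : ⟪w, u1⟫ = Real.sqrt c) (hwv2 : ⟪w, v 2⟫ ≠ 0) :
    ∃ α β : Fin 3 → ℝ,
      Orthonormal ℝ (fun k => α k • (⟪w, v k⟫ • w) + β k • (v k - ⟪w, v k⟫ • w)) := by
  refine ⟨![0, 0, ⟪w, v 2⟫⁻¹],
    ![k0⁻¹ * (Real.sqrt (1 - c))⁻¹, k1⁻¹ * (Real.sqrt (1 - c))⁻¹, 0], ?_⟩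
  have hfun : (fun k => (![0, 0, ⟪w, v 2⟫⁻¹] : Fin 3 → ℝ) k • (⟪w, v k⟫ • w)
        + (![k0⁻¹ * (Real.sqrt (1 - c))⁻¹, k1⁻¹ * (Real.sqrt (1 - c))⁻¹, 0] : Fin 3 → ℝ) k
          • (v k - ⟪w, v k⟫ • w))
      = ![(Real.sqrt (1 - c))⁻¹ • (u0 - Real.sqrt c • w),
          (Real.sqrt (1 - c))⁻¹ • (u1 - Real.sqrt c • w), w] := by
    have hr : Real.sqrt (1 - c) ≠ 0 := (Real.sqrt_pos.mpr (by linarith)).ne'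
    funext k
    fin_cases k
    · show (0:ℝ) • (⟪w, v 0⟫ • w) + (k0⁻¹ * (Real.sqrt (1 - c))⁻¹) • (v 0 - ⟪w, v 0⟫ • w)
        = (Real.sqrt (1 - c))⁻¹ • (u0 - Real.sqrt c • w)
      rw [h0, real_inner_smul_right, hw0]
      match_scalars <;> field_simp [hk0, hk1, hr] <;> ring
    · show (0:ℝ) • (⟪w, v 1⟫ • w) + (k1⁻¹ * (Real.sqrt (1 - c))⁻¹) • (v 1 - ⟪w, v 1⟫ • w)
        = (Real.sqrt (1 - c))⁻¹ • (u1 - Real.sqrt c • w)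
      rw [h1, real_inner_smul_right, hw1]
      match_scalars <;> field_simp [hk0, hk1, hr] <;> ring
    · show ⟪w, v 2⟫⁻¹ • (⟪w, v 2⟫ • w) + (0:ℝ) • (v 2 - ⟪w, v 2⟫ • w) = w
      rw [smul_smul, inv_mul_cancel₀ hwv2, one_smul, zero_smul, add_zero]
  rw [hfun]
  exact ortho_triple hc0 hc1 h00 h11 h01 hww hw0 hw1
lemma unit_of_inner_one {u : E3} (h : ⟪u, u⟫ = 1) : ‖u‖ = 1 := by
  have := real_inner_self_eq_norm_mul_norm u
  rw [h] at this
  nlinarith [norm_nonneg u]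
lemma core (v : Fin 3 → E3) (hv : LinearIndependent ℝ v) :
    ∃ w : E3, ‖w‖ = 1 ∧ ∃ α β : Fin 3 → ℝ,
      Orthonormal ℝ (fun k => α k • (⟪w, v k⟫ • w) + β k • (v k - ⟪w, v k⟫ • w)) := by
  classical
  obtain ⟨n, hnn, hn0, hn1, hn2⟩ := exists_normal v hv
  have hnv0 : ‖v 0‖ ≠ 0 := norm_ne_zero_iff.mpr (hv.ne_zero 0)
  have hnv1 : ‖v 1‖ ≠ 0 := norm_ne_zero_iff.mpr (hv.ne_zero 1)
  obtain ⟨ε, hε, hεsign⟩ : ∃ ε : ℝ, (ε = -1 ∨ ε = 1) ∧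
      0 ≤ ε * ⟪‖v 0‖⁻¹ • v 0, ‖v 1‖⁻¹ • v 1⟫ := by
    rcases le_or_gt 0 ⟪‖v 0‖⁻¹ • v 0, ‖v 1‖⁻¹ • v 1⟫ with h | h
    · exact ⟨1, Or.inr rfl, by simpa using h⟩
    · exact ⟨-1, Or.inl rfl, by nlinarith⟩
  have hεne : ε ≠ 0 := by rcases hε with h | h <;> rw [h] <;> norm_num
  set u0 : E3 := ‖v 0‖⁻¹ • v 0 with hu0def
  set u1 : E3 := ε • ‖v 1‖⁻¹ • v 1 with hu1def
  have h0 : v 0 = ‖v 0‖ • u0 := by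
    rw [hu0def]
    match_scalars
    field_simp
  have h1 : v 1 = (ε⁻¹ * ‖v 1‖) • u1 := by
    rw [hu1def]
    match_scalars
    field_simp
  have hu1' : u1 = (ε * ‖v 1‖⁻¹) • v 1 := by
    rw [hu1def]
    match_scalars
    ring
  have h00 : ⟪u0, u0⟫ = 1 := by
    rw [hu0def]
    simp only [real_inner_smul_left, real_inner_smul_right]
    rw [real_inner_self_eq_norm_mul_norm]
    field_simp
  have h11 : ⟪u1, u1⟫ = 1 := by
    rw [hu1def]
    simp only [real_inner_smul_left, real_inner_smul_right]
    rw [real_inner_self_eq_norm_mul_norm]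
    rcases hε with h | h <;> rw [h] <;> field_simp
  have hc0 : 0 ≤ ⟪u0, u1⟫ := by
    have heq : ⟪u0, u1⟫ = ε * ⟪u0, ‖v 1‖⁻¹ • v 1⟫ := by
      rw [hu1def, real_inner_smul_right]
    rw [heq]
    exact hεsign
  have hc1 : ⟪u0, u1⟫ < 1 := by
    rcases lt_or_ge ⟪u0, u1⟫ 1 with h | h
    · exact h
    · exfalso
      have hnu0 : ‖u0‖ = 1 := unit_of_inner_one h00
      have hnu1 : ‖u1‖ = 1 := unit_of_inner_one h11
      have hle : ⟪u0, u1⟫ ≤ 1 := by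
        have := real_inner_le_norm u0 u1
        rw [hnu0, hnu1] at this
        simpa using this
      have heq1 : ⟪u0, u1⟫ = ‖u0‖ * ‖u1‖ := by
        rw [hnu0, hnu1, le_antisymm hle h]; norm_num
      rw [inner_eq_norm_mul_iff_real, hnu0, hnu1, one_smul, one_smul] at heq1
      have hveq : (‖v 0‖ * (ε * ‖v 1‖⁻¹)) • v 1 = v 0 := by
        rw [← smul_smul, ← hu1', ← heq1, ← h0]
      have hpair : LinearIndependent ℝ ![v 0, v 1] := by
        have hcomp := hv.comp ![0, 1] (by decide)
        convert hcomp using 1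
        funext i
        fin_cases i <;> rfl
      rw [linearIndependent_fin2] at hpair
      have := hpair.2 (‖v 0‖ * (ε * ‖v 1‖⁻¹))
      simp only [Matrix.cons_val_one, Matrix.head_cons, Matrix.cons_val_zero] at this
      exact this hveq
  have hnu0' : ⟪n, u0⟫ = 0 := by
    rw [hu0def, real_inner_smul_right, hn0, mul_zero]
  have hnu1' : ⟪n, u1⟫ = 0 := by
    rw [hu1def, real_inner_smul_right, real_inner_smul_right, hn1, mul_zero, mul_zero]
  obtain ⟨w, hww, hw0, hw1, hwz⟩ :=
    build_w hc0 hc1 h00 h11 rfl hnn hnu0' hnu1' hn2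
  obtain ⟨α, β, horth⟩ := core_abstract v u0 u1 w ⟪u0, u1⟫ (‖v 0‖) (ε⁻¹ * ‖v 1‖)
    hnv0 (mul_ne_zero (inv_ne_zero hεne) hnv1) h0 h1 hc0 hc1 h00 h11 rfl hww hw0 hw1 hwz
  exact ⟨w, unit_of_inner_one hww, α, β, horth⟩
lemma parseval_of_orthonormal {e : Fin 3 → E3} (he : Orthonormal ℝ e) (y : E3) :
    ∑ k, ⟪y, e k⟫ ^ 2 = ‖y‖ ^ 2 := by
  have hcard : Fintype.card (Fin 3) = Module.finrank ℝ E3 := by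
    simp [finrank_euclideanSpace]
  let b := basisOfOrthonormalOfCardEqFinrank he hcard
  have hb : Orthonormal ℝ b := by
    rw [show ⇑b = e from coe_basisOfOrthonormalOfCardEqFinrank he hcard]
    exact he
  let ob := b.toOrthonormalBasis hb
  have hob : ⇑ob = e := by
    rw [Module.Basis.coe_toOrthonormalBasis]
    exact coe_basisOfOrthonormalOfCardEqFinrank he hcard
  have hsum := ob.sum_inner_mul_inner y y
  rw [hob] at hsum
  calc ∑ k, ⟪y, e k⟫ ^ 2 = ∑ k, ⟪y, e k⟫ * ⟪e k, y⟫ := by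
        refine Finset.sum_congr rfl fun k _ => ?_
        rw [pow_two, real_inner_comm (e k) y]
      _ = ⟪y, y⟫ := hsum
      _ = ‖y‖ ^ 2 := real_inner_self_eq_norm_sq y
lemma exists_li_triple {m : ℕ} (x : Fin m → E3)
    (hframe : Submodule.span ℝ (Set.range x) = ⊤) :
    ∃ g : Fin 3 → Fin m, LinearIndependent ℝ (x ∘ g) := by
  classical
  obtain ⟨s, hsub, hspan, hind⟩ := exists_linearIndependent ℝ (Set.range x)
  have hfin : s.Finite := hind.setFinite
  haveI := hfin.fintype
  have hcards : s.toFinset.card = 3 := by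
    have h1 : Module.finrank ℝ (Submodule.span ℝ s) = s.toFinset.card :=
      finrank_span_set_eq_card hind
    rw [hspan, hframe] at h1
    rw [← h1, finrank_top, finrank_euclideanSpace]
    simp
  have hcard : Fintype.card s = 3 := by rwa [Set.toFinset_card] at hcards
  let e : Fin 3 ≃ s := (Fintype.equivFinOfCardEq hcard).symm
  have hmem : ∀ k : Fin 3, ((e k : E3)) ∈ Set.range x := fun k => hsub (e k).2
  choose g hg using hmem
  refine ⟨g, ?_⟩
  have : (x ∘ g) = fun k => ((e k : E3)) := by
    funext k
    exact hg k
  rw [this]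
  exact hind.comp e e.injective
theorem stmt10 {m : ℕ} (x : Fin m → EuclideanSpace ℝ (Fin 3))
    (hframe : Submodule.span ℝ (Set.range x) = ⊤) :
    ∃ P : EuclideanSpace ℝ (Fin 3) →ₗ[ℝ] EuclideanSpace ℝ (Fin 3),
      IsOrthProj P ∧ ∃ a b : Fin m → ℝ,
        IsParseval (fun i => a i • P (x i) + b i • (x i - P (x i))) := by
  classical
  obtain ⟨g, hgli⟩ := exists_li_triple x hframe
  obtain ⟨w, hwnorm, α, β, horth⟩ := core (x ∘ g) hgli
  have hww : ⟪w, w⟫ = 1 := by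
    rw [real_inner_self_eq_norm_mul_norm, hwnorm]; norm_num
  refine ⟨{ toFun := fun y => ⟪w, y⟫ • w
            map_add' := by intro y z; rw [inner_add_right, add_smul]
            map_smul' := by
              intro r y
              rw [real_inner_smul_right, RingHom.id_apply, smul_smul] }, ⟨?_, ?_⟩, ?_⟩
  · apply LinearMap.ext
    intro y
    show ⟪w, ⟪w, y⟫ • w⟫ • w = ⟪w, y⟫ • w
    rw [real_inner_smul_right, hww, mul_one]
  · intro y z
    show ⟪⟪w, y⟫ • w, z⟫ = ⟪y, ⟪w, z⟫ • w⟫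
    rw [real_inner_smul_left, real_inner_smul_right, real_inner_comm y w]
    ring
  · have hginj : Function.Injective g := by
      intro k l h
      exact hgli.injective (by simp [Function.comp, h])
    refine ⟨fun i => if h : ∃ k, g k = i then α h.choose else 0,
            fun i => if h : ∃ k, g k = i then β h.choose else 0, ?_⟩
    intro y
    show ∑ i, ⟪y, (if h : ∃ k, g k = i then α h.choose else 0) • (⟪w, x i⟫ • w)
        + (if h : ∃ k, g k = i then β h.choose else 0) • (x i - ⟪w, x i⟫ • w)⟫ ^ 2 = ‖y‖ ^ 2
    rw [← Finset.sum_subset (Finset.subset_univ (Finset.univ.image g))]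
    · rw [Finset.sum_image (fun k _ l _ h => hginj h)]
      have hstep : ∀ k : Fin 3,
          ⟪y, (if h : ∃ k', g k' = g k then α h.choose else 0) • (⟪w, x (g k)⟫ • w)
            + (if h : ∃ k', g k' = g k then β h.choose else 0) • (x (g k) - ⟪w, x (g k)⟫ • w)⟫ ^ 2
          = ⟪y, α k • (⟪w, (x ∘ g) k⟫ • w) + β k • ((x ∘ g) k - ⟪w, (x ∘ g) k⟫ • w)⟫ ^ 2 := by
        intro k
        have hex : ∃ k', g k' = g k := ⟨k, rfl⟩
        have hch : hex.choose = k := hginj hex.choose_spec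
        rw [dif_pos hex, dif_pos hex, hch]
        rfl
      rw [Finset.sum_congr rfl (fun k _ => hstep k)]
      exact parseval_of_orthonormal horth y
    · intro i _ hi
      have hnex : ¬ ∃ k, g k = i := by
        intro ⟨k, hk⟩
        exact hi (Finset.mem_image.mpr ⟨k, Finset.mem_univ k, hk⟩)
      rw [dif_neg hnex, dif_neg hnex, zero_smul, zero_smul, add_zero, inner_zero_right]
      norm_num
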